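/- With Q = (1/2)[K₊,K₋]η⁻¹ as above (K± para-Hermitian for the same η), Q satisfies K± Q K±* = Q; equivalently, the bivector Q is of type (2,0)+(0,2) with respect to both K₊ and K₋. -/
import Mathlib

lemma key13 {V : Type*} [AddCommGroup V] [Module ℝ V]
    (η : V ≃ₗ[ℝ] Module.Dual ℝ V)
    (hsymm : ∀ x y, η x y = η y x)
    (K : Module.End ℝ V)
    (hK2 : ∀ x, K (K x) = x)
    (hKη : ∀ x y, η (K x) (K y) = - η x y)
    (f : Module.Dual ℝ V) :
    η.symm (K.dualMap f) = - K (η.symm f) := by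
  apply η.injective
  apply LinearMap.ext
  intro y
  rw [η.apply_symm_apply]
  have h1 : K.dualMap f y = f (K y) := rfl
  have h2 : η (-(K (η.symm f))) y = - η (K (η.symm f)) y := by simp
  rw [h1, h2]
  have h3 : η (K (η.symm f)) y = η (K (η.symm f)) (K (K y)) := by rw [hK2]
  rw [h3, hKη, η.apply_symm_apply, neg_neg]

/-- the bivector `Q = (1/2)[Kp,Km]η⁻¹` of a bi-para-Hermitian
pair satisfies `K± ∘ Q ∘ K±* = Q`, i.e. `Q` is of type `(2,0)+(0,2)` with
respect to both `Kp` and `Km`. -/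
theorem stmt13 {V : Type*} [AddCommGroup V] [Module ℝ V] [FiniteDimensional ℝ V]
    (η : V ≃ₗ[ℝ] Module.Dual ℝ V)
    (hsymm : ∀ x y, η x y = η y x)
    (Kp Km : Module.End ℝ V)
    (hKp2 : ∀ x, Kp (Kp x) = x) (hKm2 : ∀ x, Km (Km x) = x)
    (hKpη : ∀ x y, η (Kp x) (Kp y) = - η x y)
    (hKmη : ∀ x y, η (Km x) (Km y) = - η x y) :
    Kp ∘ₗ ((1/2 : ℝ) • ((Kp ∘ₗ Km - Km ∘ₗ Kp) ∘ₗ η.symm.toLinearMap)) ∘ₗ Kp.dualMap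
      = (1/2 : ℝ) • ((Kp ∘ₗ Km - Km ∘ₗ Kp) ∘ₗ η.symm.toLinearMap) ∧
    Km ∘ₗ ((1/2 : ℝ) • ((Kp ∘ₗ Km - Km ∘ₗ Kp) ∘ₗ η.symm.toLinearMap)) ∘ₗ Km.dualMap
      = (1/2 : ℝ) • ((Kp ∘ₗ Km - Km ∘ₗ Kp) ∘ₗ η.symm.toLinearMap) := by
  constructor
  · apply LinearMap.ext
    intro f
    simp only [LinearMap.comp_apply, LinearMap.smul_apply, LinearMap.coe_comp,
      LinearEquiv.coe_coe, Function.comp_apply, LinearMap.sub_apply]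
    rw [key13 η hsymm Kp hKp2 hKpη f]
    set x := η.symm f
    simp only [map_neg, map_smul, map_sub, hKp2]
    module
  · apply LinearMap.ext
    intro f
    simp only [LinearMap.comp_apply, LinearMap.smul_apply, LinearMap.coe_comp,
      LinearEquiv.coe_coe, Function.comp_apply, LinearMap.sub_apply]
    rw [key13 η hsymm Km hKm2 hKmη f]
    set x := η.symm f
    simp only [map_neg, map_smul, map_sub, hKm2]
    module
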